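/- Consider the networked snowdrift game with benefit b_i(p) = Σ_j A_{ij} [β p_j + β p_i + p_i (γ/2 − β) p_j] and cost c_i(p_i) = γ d_i p_i on [0,1]^N. If β > γ/2 > 0, then for every p̂ ∈ [0,1]^N and every i, Σ_j ∂b_j/∂p_i(p̂) ≥ c_i′(p̂_i) = γ d_i, with strict inequality at p̂ = 0; i.e., condition (3) of a social dilemma is satisfied whenever β > γ/2. -/

import Mathlib

lemma snowdrift_fderiv_eval (N : ℕ) (A : Fin N → Fin N → ℝ) (β μ : ℝ) (j i : Fin N)
    (phat : Fin N → ℝ) (b : Fin N → (Fin N → ℝ) → ℝ)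
    (hb : ∀ i, b i = fun p => ∑ k : Fin N, A i k * (β * p k + β * p i + p i * μ * p k)) :
    fderiv ℝ (b j) phat (Pi.single i 1) =
      A j i * (β + μ * phat j) + (if j = i then ∑ k : Fin N, A i k * (β + μ * phat k) else 0) := by
  have h := HasFDerivAt.fun_sum (u := Finset.univ) fun (k : Fin N) _ =>
    (((((ContinuousLinearMap.proj (R := ℝ) (φ := fun _ : Fin N => ℝ) k).hasFDerivAt (x := phat)).const_mul β).add
      (((ContinuousLinearMap.proj j).hasFDerivAt (x := phat)).const_mul β)).add
      ((((ContinuousLinearMap.proj (R := ℝ) (φ := fun _ : Fin N => ℝ) j).hasFDerivAt (x := phat)).mul_const μ).mul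
        ((ContinuousLinearMap.proj k).hasFDerivAt (x := phat)))).const_mul (A j k)
  have h2 : HasFDerivAt (fun p : Fin N → ℝ => ∑ k : Fin N, A j k * (β * p k + β * p j + p j * μ * p k))
      (∑ k : Fin N,
        A j k • (β • ContinuousLinearMap.proj k + β • ContinuousLinearMap.proj j +
          ((phat j * μ) • ContinuousLinearMap.proj k +
            phat k • μ • (ContinuousLinearMap.proj (R := ℝ) (φ := fun _ : Fin N => ℝ) j)))) phat := h
  rw [hb, h2.fderiv]
  simp [ContinuousLinearMap.sum_apply, Pi.single_apply, Finset.mul_sum, mul_ite,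
    Finset.sum_add_distrib, Finset.sum_ite_eq', mul_add]
  split_ifs with hji
  · subst hji
    rw [show (∑ x : Fin N, A j x * β + ∑ x : Fin N, A j x * (μ * phat x))
        = ∑ x : Fin N, (A j x * β + A j x * (phat x * μ)) by
      rw [← Finset.sum_add_distrib]; exact Finset.sum_congr rfl fun x _ => by ring]
    rw [Finset.sum_add_distrib]
    ring
  · ring

/-- In the networked snowdrift game with benefit
`b i p = ∑ j, A i j * (β p j + β p i + p i (γ/2 - β) p j)` and cost `c i x = γ * d i * x`,
if `β > γ/2 > 0` then condition (3) of the social dilemma holds everywhere on the cube: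
`∑ j, ∂b_j/∂p_i (phat) ≥ c_i'(phat i) = γ d i`, with strict inequality at `phat = 0`. -/
theorem snowdrift_condition3
    (N : ℕ)
    (A : Fin N → Fin N → ℝ) (hA01 : ∀ i j, A i j = 0 ∨ A i j = 1)
    (hAsymm : ∀ i j, A i j = A j i) (hAdiag : ∀ i, A i i = 0)
    (d : Fin N → ℝ) (hd : ∀ i, d i = ∑ j : Fin N, A i j) (hdpos : ∀ i, 0 < d i)
    (β γ : ℝ) (hγ : 0 < γ / 2) (hβ : β > γ / 2)
    (b : Fin N → (Fin N → ℝ) → ℝ) (c : Fin N → ℝ → ℝ)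
    (hb : ∀ i, b i = fun p =>
      ∑ j : Fin N, A i j * (β * p j + β * p i + p i * (γ / 2 - β) * p j))
    (hc : ∀ i, c i = fun x => γ * d i * x) :
    (∀ phat ∈ Set.Icc (0 : Fin N → ℝ) 1, ∀ i : Fin N,
      deriv (c i) (phat i) = γ * d i ∧
      ∑ j : Fin N, fderiv ℝ (b j) phat (Pi.single i 1) ≥ γ * d i) ∧
    (∀ i : Fin N,
      ∑ j : Fin N, fderiv ℝ (b j) (0 : Fin N → ℝ) (Pi.single i 1) > γ * d i) := by
  set μ : ℝ := γ / 2 - β with hμ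
  have hAnn : ∀ i j, 0 ≤ A i j := fun i j => by rcases hA01 i j with h | h <;> simp [h]
  -- the key sum formula
  have hsum : ∀ (phat : Fin N → ℝ) (i : Fin N),
      ∑ j : Fin N, fderiv ℝ (b j) phat (Pi.single i 1)
        = 2 * ∑ k : Fin N, A i k * (β + μ * phat k) := by
    intro phat i
    have : ∀ j : Fin N, fderiv ℝ (b j) phat (Pi.single i 1)
        = A j i * (β + μ * phat j) + (if j = i then ∑ k : Fin N, A i k * (β + μ * phat k) else 0) :=
      fun j => snowdrift_fderiv_eval N A β μ j i phat b hb
    rw [Finset.sum_congr rfl fun j _ => this j, Finset.sum_add_distrib,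
      Finset.sum_ite_eq' Finset.univ i (fun _ => ∑ k : Fin N, A i k * (β + μ * phat k))]
    simp only [Finset.mem_univ, if_true]
    rw [Finset.sum_congr rfl (fun j _ => by rw [hAsymm j i])]
    ring
  have hderiv : ∀ (i : Fin N) (x : ℝ), deriv (c i) x = γ * d i := by
    intro i x
    rw [hc]
    simpa using ((hasDerivAt_id x).const_mul (γ * d i)).deriv
  constructor
  · intro phat hp i
    refine ⟨hderiv i (phat i), ?_⟩
    rw [hsum phat i]
    have hterm : ∀ k : Fin N, A i k * (γ / 2) ≤ A i k * (β + μ * phat k) := by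
      intro k
      apply mul_le_mul_of_nonneg_left _ (hAnn i k)
      simp only [hμ]
      nlinarith [mul_nonneg (by linarith : (0:ℝ) ≤ β - γ / 2)
        (by have h2 : phat k ≤ 1 := hp.2 k; linarith : (0:ℝ) ≤ 1 - phat k)]
    have : ∑ k : Fin N, A i k * (γ / 2) ≤ ∑ k : Fin N, A i k * (β + μ * phat k) :=
      Finset.sum_le_sum fun k _ => hterm k
    rw [← Finset.sum_mul] at this
    rw [← hd i] at this
    linarith
  · intro i
    rw [hsum 0 i]
    simp only [Pi.zero_apply, mul_zero, add_zero, ← Finset.sum_mul, ← hd i]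
    calc γ * d i < d i * β * 2 := by nlinarith [hdpos i]
    _ = 2 * (d i * β) := by ring
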